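/- For the cubic eigenvalue equation (λ + γ₁)(λ + γ₂)(λ + γ₃) − γ₁γ₂γ₃ κ_d f'* = 0 with γ₁, γ₂, γ₃ > 0 and κ_d > 0: if 0 ≤ f'* < 1/κ_d then the polynomial has no positive real root, and if f'* > 1/κ_d then it has exactly one positive real root. -/

import Mathlib

/-- The eigenvalue equation (λ+γ₁)(λ+γ₂)(λ+γ₃) − γ₁γ₂γ₃κ_d f'* = 0 has no positive real
root when 0 ≤ f'* < 1/κ_d and exactly one positive real root when f'* > 1/κ_d. -/
theorem eigenvalue_positive_roots
    (γ₁ γ₂ γ₃ κd f' : ℝ) (h₁ : 0 < γ₁) (h₂ : 0 < γ₂) (h₃ : 0 < γ₃) (hκ : 0 < κd) :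
    (0 ≤ f' ∧ f' < 1 / κd →
      ∀ l : ℝ, 0 < l → (l + γ₁) * (l + γ₂) * (l + γ₃) - γ₁ * γ₂ * γ₃ * κd * f' ≠ 0) ∧
    (1 / κd < f' →
      ∃! l : ℝ, 0 < l ∧ (l + γ₁) * (l + γ₂) * (l + γ₃) - γ₁ * γ₂ * γ₃ * κd * f' = 0) := by
  constructor
  · rintro ⟨hf0, hf1⟩ l hl
    have hκf : f' * κd < 1 := (lt_div_iff₀ hκ).mp hf1
    have hle : γ₁ * γ₂ * γ₃ * κd * f' ≤ γ₁ * γ₂ * γ₃ := by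
      nlinarith [mul_pos (mul_pos h₁ h₂) h₃]
    have hgt : γ₁ * γ₂ * γ₃ < (l + γ₁) * (l + γ₂) * (l + γ₃) := by
      nlinarith [mul_pos h₁ h₂, mul_pos h₂ h₃, mul_pos h₁ h₃,
        mul_pos (mul_pos hl hl) hl, mul_pos (mul_pos hl hl) h₃,
        mul_pos (mul_pos hl h₂) h₃, mul_pos (mul_pos hl hl) h₂,
        mul_pos (mul_pos hl h₁) h₃, mul_pos (mul_pos hl h₁) h₂]
    intro h
    linarith
  · intro hf
    have hκf : 1 < f' * κd := (div_lt_iff₀ hκ).mp hf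
    have hf0 : 0 < f' := by nlinarith
    set c : ℝ := γ₁ * γ₂ * γ₃ * κd * f' with hc
    have hc0 : 0 < c := by positivity
    have hglt : γ₁ * γ₂ * γ₃ < c := by
      have := mul_pos (mul_pos h₁ h₂) h₃
      nlinarith
    set g : ℝ → ℝ := fun l => (l + γ₁) * (l + γ₂) * (l + γ₃) with hg
    have hcont : Continuous g := by fun_prop
    have hmono : StrictMonoOn g (Set.Ici (0 : ℝ)) := by
      intro a ha b hb hab
      simp only [hg, Set.mem_Ici] at *
      have hd : 0 < b - a := sub_pos.mpr hab
      nlinarith [mul_pos h₁ h₂, mul_pos h₂ h₃, mul_pos h₁ h₃,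
        mul_pos hd (mul_pos h₁ h₂), mul_pos hd (mul_pos h₂ h₃),
        mul_pos hd (mul_pos h₁ h₃),
        mul_nonneg (mul_nonneg hd.le ha) hb,
        mul_nonneg (mul_nonneg hd.le ha) ha, mul_nonneg (mul_nonneg hd.le hb) hb,
        mul_nonneg (mul_nonneg hd.le ha) h₁.le, mul_nonneg (mul_nonneg hd.le hb) h₁.le,
        mul_nonneg (mul_nonneg hd.le ha) h₂.le, mul_nonneg (mul_nonneg hd.le hb) h₂.le,
        mul_nonneg (mul_nonneg hd.le ha) h₃.le, mul_nonneg (mul_nonneg hd.le hb) h₃.le]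
    set M : ℝ := c / (γ₂ * γ₃) with hM
    have hM0 : 0 < M := by positivity
    have hgM : c < g M := by
      have hMc : M * (γ₂ * γ₃) = c := by
        rw [hM]; field_simp [h₂.ne', h₃.ne']
      have : M * γ₂ * γ₃ < (M + γ₁) * (M + γ₂) * (M + γ₃) := by
        nlinarith [mul_pos hM0 h₂, mul_pos hM0 h₃, mul_pos h₂ h₃,
          mul_pos (mul_pos hM0 hM0) hM0, mul_pos (mul_pos hM0 hM0) h₂,
          mul_pos (mul_pos hM0 hM0) h₃, mul_pos (mul_pos hM0 h₂) h₃,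
          mul_pos (mul_pos h₁ h₂) h₃, mul_pos (mul_pos hM0 h₁) h₂,
          mul_pos (mul_pos hM0 h₁) h₃, mul_pos (mul_pos hM0 hM0) h₁]
      simp only [hg]
      nlinarith
    have hg0 : g 0 = γ₁ * γ₂ * γ₃ := by simp [hg]
    have hivt : ∃ l ∈ Set.Icc (0 : ℝ) M, g l = c := by
      have := intermediate_value_Icc (le_of_lt hM0) (hcont.continuousOn (s := Set.Icc 0 M))
      apply this
      constructor
      · rw [hg0]; linarith
      · linarith
    obtain ⟨l, ⟨hl0, hlM⟩, hlc⟩ := hivt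
    have hlpos : 0 < l := by
      rcases lt_or_eq_of_le hl0 with h | h
      · exact h
      · exfalso; rw [← h] at hlc; rw [hg0] at hlc; linarith
    refine ⟨l, ⟨hlpos, by simp only [hg] at hlc; linarith⟩, ?_⟩
    rintro y ⟨hy0, hy⟩
    have hyc : g y = c := by simp only [hg]; linarith
    exact hmono.injOn (Set.mem_Ici.mpr hy0.le) (Set.mem_Ici.mpr hl0) (hyc.trans hlc.symm)
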